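/- Let n ≥ 1 and 1 ≤ ω ≤ ϖ be integers, let m ∈ M_ω with m ≠ 0, and let c ∈ ℝⁿ with |c_j| ≤ 1 for all j; set s = m ∘ c (componentwise product). Let n_s divide n with n_s ≥ 2ϖ−1, fix r_0 ∈ {0,…,n−1}, and set r_i = (r_0 + i·(n/n_s)) mod n for i = 0,…,n_s−1. Let m̂ ∈ S_{≥|s|} ∩ S_ϖ satisfy ‖m̂‖₂ ≤ ‖x‖₂ for every x ∈ S_{≥|s|} ∩ S_ϖ. Then ‖m − m̂‖₂ / ‖m‖₂ ≤ sqrt(1 − (Σ_{i=0}^{n_s−1} s_{r_i}²)/(Σ_{i=0}^{n_s−1} m_{r_i}²)). -/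

import Mathlib

open scoped BigOperators

noncomputable section

/-- Low-frequency index set `K_ω ⊆ {0,…,n−1}`. -/
def Kset (n ω : ℕ) : Set (Fin n) := {k | (k : ℕ) ≤ ω - 1 ∨ n - ω + 1 ≤ (k : ℕ)}

/-- The set of ω-bandlimited real vectors `S_ω`. -/
def Sband (n ω : ℕ) : Set (EuclideanSpace ℝ (Fin n)) :=
  {x | ∀ k : Fin n, k ∉ Kset n ω →
    ∑ j : Fin n, (x j : ℂ) *
      Complex.exp (-(2 * (Real.pi : ℂ) * Complex.I * ((j : ℕ) : ℂ) * ((k : ℕ) : ℂ)) / (n : ℂ)) = 0}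

/-- The set of nonnegative ω-bandlimited vectors `M_ω`. -/
def Mmod (n ω : ℕ) : Set (EuclideanSpace ℝ (Fin n)) :=
  {x ∈ Sband n ω | ∀ j, 0 ≤ x j}

/-- The constraint set `S_{≥|s|}`. -/
def Sgeq (n : ℕ) (s : EuclideanSpace ℝ (Fin n)) : Set (EuclideanSpace ℝ (Fin n)) :=
  {x | ∀ j, |s j| ≤ x j}

namespace MRBaux

/-- The root of unity `exp(2πi t / n)` as a function of an integer exponent. -/
noncomputable def cexp (n : ℕ) (t : ℤ) : ℂ :=
  Complex.exp (2 * (Real.pi : ℂ) * Complex.I * (t : ℂ) / (n : ℂ))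

lemma cexp_add (n : ℕ) (a b : ℤ) : cexp n (a + b) = cexp n a * cexp n b := by
  rw [cexp, cexp, cexp, ← Complex.exp_add]
  congr 1
  push_cast
  ring

lemma cexp_zero (n : ℕ) : cexp n 0 = 1 := by simp [cexp]

lemma cexp_pow (n : ℕ) (t : ℤ) (j : ℕ) : cexp n t ^ j = cexp n (t * j) := by
  induction j with
  | zero => simp [cexp_zero]
  | succ k ih =>
    rw [pow_succ, ih, ← cexp_add]
    congr 1
    push_cast
    ring

lemma cexp_nmul (n : ℕ) (hn : n ≠ 0) (q : ℤ) : cexp n ((n : ℤ) * q) = 1 := by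
  rw [cexp]
  have hn' : (n : ℂ) ≠ 0 := Nat.cast_ne_zero.mpr hn
  have : 2 * (Real.pi : ℂ) * Complex.I * ((((n : ℤ) * q : ℤ)) : ℂ) / (n : ℂ)
      = (q : ℂ) * (2 * (Real.pi : ℂ) * Complex.I) := by
    push_cast
    field_simp
  rw [this]
  exact_mod_cast Complex.exp_int_mul_two_pi_mul_I q

lemma cexp_congr (n : ℕ) (hn : n ≠ 0) (a b : ℤ) (h : (n : ℤ) ∣ (a - b)) :
    cexp n a = cexp n b := by
  obtain ⟨q, hq⟩ := h
  have : a = b + (n : ℤ) * q := by linarith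
  rw [this, cexp_add, cexp_nmul n hn, mul_one]

lemma cexp_eq_one_iff (n : ℕ) (hn : n ≠ 0) (t : ℤ) :
    cexp n t = 1 ↔ (n : ℤ) ∣ t := by
  constructor
  · intro h
    rw [cexp, Complex.exp_eq_one_iff] at h
    obtain ⟨k, hk⟩ := h
    have hn' : (n : ℂ) ≠ 0 := Nat.cast_ne_zero.mpr hn
    have hπ : (Real.pi : ℂ) ≠ 0 := by exact_mod_cast Real.pi_ne_zero
    have h2 : (2 : ℂ) * (Real.pi : ℂ) * Complex.I ≠ 0 := by
      simp [hπ, Complex.I_ne_zero]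
    have hk' : 2 * (Real.pi : ℂ) * Complex.I * (t : ℂ)
        = 2 * (Real.pi : ℂ) * Complex.I * ((k : ℂ) * (n : ℂ)) := by
      field_simp at hk
      linear_combination (2 * (Real.pi : ℂ) * Complex.I) * hk
    have : (t : ℂ) = ((k * n : ℤ) : ℂ) := by
      have := mul_left_cancel₀ h2 hk'
      push_cast
      exact this
    have ht : t = k * n := by exact_mod_cast this
    exact ⟨k, by linarith⟩
  · rintro ⟨q, rfl⟩
    exact cexp_nmul n hn q

lemma geom_sum_root (N : ℕ) (w : ℂ) (hw : w ^ N = 1) :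
    ∑ u : Fin N, w ^ (u : ℕ) = if w = 1 then (N : ℂ) else 0 := by
  split_ifs with h
  · simp [h]
  · rw [Fin.sum_univ_eq_sum_range, geom_sum_eq h, hw]
    simp

lemma orth (n : ℕ) (hn : n ≠ 0) (t : ℤ) :
    ∑ j : Fin n, cexp n ((j : ℕ) * t) = if (n : ℤ) ∣ t then (n : ℂ) else 0 := by
  have h1 : ∀ j : Fin n, cexp n ((j : ℕ) * t) = cexp n t ^ (j : ℕ) := by
    intro j
    rw [cexp_pow]
    congr 1
    ring
  have hw : cexp n t ^ n = 1 := by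
    rw [cexp_pow]
    have : t * (n : ℕ) = (n : ℤ) * t := by push_cast; ring
    rw [this]
    exact cexp_nmul n hn t
  rw [Finset.sum_congr rfl (fun j _ => h1 j), geom_sum_root n _ hw]
  by_cases h : (n : ℤ) ∣ t
  · rw [if_pos ((cexp_eq_one_iff n hn t).mpr h), if_pos h]
  · rw [if_neg (fun hc => h ((cexp_eq_one_iff n hn t).mp hc)), if_neg h]

lemma fin_dvd_iff (n : ℕ) (j j' : Fin n) :
    (n : ℤ) ∣ (((j' : ℕ) : ℤ) - ((j : ℕ) : ℤ)) ↔ j' = j := by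
  constructor
  · intro h
    have h1 := j.isLt
    have h2 := j'.isLt
    have h0 : (((j' : ℕ) : ℤ) - ((j : ℕ) : ℤ)) = 0 := by
      refine Int.eq_zero_of_abs_lt_dvd h ?_
      rw [abs_lt]
      omega
    exact Fin.ext (by omega)
  · rintro rfl
    simp

/-- The DFT of a real vector, at an arbitrary integer frequency. -/
noncomputable def Xhat (n : ℕ) (x : EuclideanSpace ℝ (Fin n)) (t : ℤ) : ℂ :=
  ∑ j : Fin n, (x j : ℂ) * cexp n (-((j : ℕ) * t))

lemma Xhat_vanish (n ϖ : ℕ) (hn : n ≠ 0) (hϖ : 1 ≤ ϖ) (x : EuclideanSpace ℝ (Fin n))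
    (hx : x ∈ Sband n ϖ) (t : ℤ) (h1 : (ϖ : ℤ) ≤ t % n) (h2 : t % n ≤ (n : ℤ) - ϖ) :
    Xhat n x t = 0 := by
  have hn0 : (0 : ℤ) < n := by exact_mod_cast Nat.pos_of_ne_zero hn
  have ha0 : 0 ≤ t % n := Int.emod_nonneg t (by exact_mod_cast hn)
  have han : t % n < n := Int.emod_lt_of_pos t hn0
  have hA : (t % n).toNat < n := by omega
  set k : Fin n := ⟨(t % n).toNat, hA⟩ with hk
  have hkv : (k : ℕ) = (t % n).toNat := rfl
  have hkK : k ∉ Kset n ϖ := by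
    intro hmem
    rcases hmem with h | h <;> omega
  have h0 := hx k hkK
  rw [Xhat, ← h0]
  apply Finset.sum_congr rfl
  intro j _
  congr 1
  have hdvd : (n : ℤ) ∣ (t - t % n) := ⟨t / n, by linarith [Int.emod_add_mul_ediv t n]⟩
  have hd2 : (n : ℤ) ∣ ((-((j : ℕ) * t)) - (-((j : ℕ) * (t % n)))) := by
    obtain ⟨q, hq⟩ := hdvd
    exact ⟨-((j : ℕ) : ℤ) * q, by linear_combination (-((j : ℕ) : ℤ)) * hq⟩
  rw [cexp_congr n hn _ _ hd2, cexp]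
  congr 1
  have hcast : (((t % n).toNat : ℕ) : ℂ) = ((t % n : ℤ) : ℂ) := by
    exact_mod_cast congrArg Int.cast (Int.toNat_of_nonneg ha0)
  simp only [hk]
  push_cast
  rw [show ((((t % (n:ℤ)).toNat : ℕ)) : ℂ) = ((t % (n:ℤ) : ℤ) : ℂ) from hcast]
  ring

/-- Vanishing of the DFT of a pointwise product of two `ϖ`-bandlimited vectors at
frequencies whose residue lies in `[2ϖ-1, n-(2ϖ-1)]`. -/
lemma prod_vanish (n ϖ : ℕ) (hn : n ≠ 0) (hϖ : 1 ≤ ϖ)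
    (x y : EuclideanSpace ℝ (Fin n)) (hx : x ∈ Sband n ϖ) (hy : y ∈ Sband n ϖ)
    (t : ℤ) (h1 : 2 * (ϖ : ℤ) - 1 ≤ t % n) (h2 : t % n ≤ (n : ℤ) - (2 * ϖ - 1)) :
    ∑ j : Fin n, ((x j : ℂ) * (y j : ℂ)) * cexp n (-((j : ℕ) * t)) = 0 := by
  have hn0 : (0 : ℤ) < n := by exact_mod_cast Nat.pos_of_ne_zero hn
  have ha0 : 0 ≤ t % n := Int.emod_nonneg t (by exact_mod_cast hn)
  have han : t % n < n := Int.emod_lt_of_pos t hn0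
  have key : ∑ l : Fin n, Xhat n x (l : ℕ) * Xhat n y (t - (l : ℕ))
      = (n : ℂ) * ∑ j : Fin n, ((x j : ℂ) * (y j : ℂ)) * cexp n (-((j : ℕ) * t)) := by
    have step1 : ∀ l : Fin n, Xhat n x (l : ℕ) * Xhat n y (t - (l : ℕ))
        = ∑ j : Fin n, ∑ j' : Fin n,
            ((x j : ℂ) * (y j' : ℂ) * cexp n (-((j' : ℕ) * t))) * cexp n ((l : ℕ) * (((j' : ℕ) : ℤ) - (j : ℕ))) := by
      intro l
      rw [Xhat, Xhat, Finset.sum_mul_sum]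
      apply Finset.sum_congr rfl
      intro j _
      apply Finset.sum_congr rfl
      intro j' _
      rw [show ((x j : ℂ) * cexp n (-((j : ℕ) * (l : ℕ)))) * ((y j' : ℂ) * cexp n (-((j' : ℕ) * (t - (l : ℕ)))))
          = ((x j : ℂ) * (y j' : ℂ)) * (cexp n (-((j : ℕ) * (l : ℕ))) * cexp n (-((j' : ℕ) * (t - (l : ℕ))))) by ring,
        ← cexp_add, show (-((j : ℕ) * (l : ℕ)) + -((j' : ℕ) * (t - (l : ℕ))) : ℤ)
          = -((j' : ℕ) * t) + (l : ℕ) * (((j' : ℕ) : ℤ) - (j : ℕ)) by ring, cexp_add]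
      ring
    rw [Finset.sum_congr rfl (fun l _ => step1 l), Finset.sum_comm]
    have step2 : ∀ j : Fin n, ∑ l : Fin n, ∑ j' : Fin n,
        ((x j : ℂ) * (y j' : ℂ) * cexp n (-((j' : ℕ) * t))) * cexp n ((l : ℕ) * (((j' : ℕ) : ℤ) - (j : ℕ)))
        = (n : ℂ) * (((x j : ℂ) * (y j : ℂ)) * cexp n (-((j : ℕ) * t))) := by
      intro j
      rw [Finset.sum_comm]
      have inner : ∀ j' : Fin n, ∑ l : Fin n,
          ((x j : ℂ) * (y j' : ℂ) * cexp n (-((j' : ℕ) * t))) * cexp n ((l : ℕ) * (((j' : ℕ) : ℤ) - (j : ℕ)))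
          = if j' = j then ((x j : ℂ) * (y j' : ℂ) * cexp n (-((j' : ℕ) * t))) * n else 0 := by
        intro j'
        rw [← Finset.mul_sum, orth n hn]
        simp only [fin_dvd_iff n j j']
        split_ifs <;> simp
      rw [Finset.sum_congr rfl (fun j' _ => inner j'), Finset.sum_ite_eq' Finset.univ j]
      simp
      ring
    rw [Finset.sum_congr rfl (fun j _ => step2 j), ← Finset.mul_sum]
  have hvan : ∀ l : Fin n, Xhat n x (l : ℕ) * Xhat n y (t - (l : ℕ)) = 0 := by
    intro l
    have hl0 : (0 : ℤ) ≤ (l : ℕ) := by positivity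
    have hln : ((l : ℕ) : ℤ) < n := by exact_mod_cast l.isLt
    have hlmod : ((l : ℕ) : ℤ) % n = (l : ℕ) := Int.emod_eq_of_lt hl0 hln
    by_cases hK : l ∈ Kset n ϖ
    · have hsub : (t - (l : ℕ)) % n = (t % n - (l : ℕ)) % n := by
        rw [Int.sub_emod, hlmod]
      have hcases : ((l : ℕ) : ℤ) ≤ (ϖ : ℤ) - 1 ∨ (n : ℤ) - ϖ + 1 ≤ ((l : ℕ) : ℤ) := by
        rcases hK with h | h
        · left; omega
        · right; omega
      rcases hcases with hc | hc
      · have hval : (t - (l : ℕ)) % n = t % n - (l : ℕ) := by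
          rw [hsub]
          apply Int.emod_eq_of_lt <;> omega
        have := Xhat_vanish n ϖ hn hϖ y hy (t - (l : ℕ)) (by omega) (by omega)
        rw [this, mul_zero]
      · have hval : (t - (l : ℕ)) % n = t % n - (l : ℕ) + n := by
          rw [hsub]
          conv_lhs => rw [show (t % (n:ℤ) - ((l : ℕ) : ℤ)) = (t % n - (l : ℕ) + n) + n * (-1) by ring,
            Int.add_mul_emod_self_left]
          apply Int.emod_eq_of_lt <;> omega
        have := Xhat_vanish n ϖ hn hϖ y hy (t - (l : ℕ)) (by omega) (by omega)
        rw [this, mul_zero]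
    · have hnotK : ¬(((l : ℕ) ≤ ϖ - 1) ∨ (n - ϖ + 1 ≤ (l : ℕ))) := hK
      push_neg at hnotK
      have h1' : (ϖ : ℤ) ≤ ((l : ℕ) : ℤ) % n := by rw [hlmod]; omega
      have h2' : ((l : ℕ) : ℤ) % n ≤ (n : ℤ) - ϖ := by rw [hlmod]; omega
      rw [Xhat_vanish n ϖ hn hϖ x hx (l : ℕ) h1' h2', zero_mul]
  rw [Finset.sum_congr rfl (fun l _ => hvan l), Finset.sum_const_zero] at key
  have hnC : (n : ℂ) ≠ 0 := Nat.cast_ne_zero.mpr hn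
  exact (mul_eq_zero.mp key.symm).resolve_left hnC

/-- The sampling identity: for two `ϖ`-bandlimited vectors, the sum of products over
`ns` equally spaced samples recovers the full inner product (up to the factor `n / ns`). -/
lemma sampling (n ϖ ns : ℕ) (hn : 1 ≤ n) (hϖ : 1 ≤ ϖ) (hdvd : ns ∣ n)
    (hns : 2 * ϖ - 1 ≤ ns) (hns1 : 1 ≤ ns)
    (r0 : ℕ) (r : Fin ns → Fin n) (hr : ∀ i : Fin ns, (r i : ℕ) = (r0 + (i : ℕ) * (n / ns)) % n)
    (x y : EuclideanSpace ℝ (Fin n)) (hx : x ∈ Sband n ϖ) (hy : y ∈ Sband n ϖ) :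
    (n : ℝ) * ∑ i : Fin ns, x (r i) * y (r i) = (ns : ℝ) * ∑ j : Fin n, x j * y j := by
  have hn' : n ≠ 0 := by omega
  set d : ℕ := n / ns with hdd
  have hd : ns * d = n := Nat.mul_div_cancel' hdvd
  have hd1 : 1 ≤ d := by
    rcases Nat.eq_zero_or_pos d with h | h
    · rw [h, Nat.mul_zero] at hd
      omega
    · exact h
  -- the DFT of the product
  set G : ℤ → ℂ := fun t => ∑ j : Fin n, ((x j : ℂ) * (y j : ℂ)) * cexp n (-((j : ℕ) * t)) with hG
  -- inversion formula
  have inv : ∀ p : Fin n, ∑ t : Fin n, G (t : ℕ) * cexp n ((p : ℕ) * (t : ℕ))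
      = (n : ℂ) * ((x p : ℂ) * (y p : ℂ)) := by
    intro p
    have expand : ∀ t : Fin n, G (t : ℕ) * cexp n ((p : ℕ) * (t : ℕ))
        = ∑ j : Fin n, ((x j : ℂ) * (y j : ℂ)) * cexp n ((t : ℕ) * (((p : ℕ) : ℤ) - (j : ℕ))) := by
      intro t
      rw [hG, Finset.sum_mul]
      apply Finset.sum_congr rfl
      intro j _
      rw [mul_assoc, ← cexp_add]
      congr 2
      ring
    rw [Finset.sum_congr rfl (fun t _ => expand t), Finset.sum_comm]
    have inner : ∀ j : Fin n, ∑ t : Fin n, ((x j : ℂ) * (y j : ℂ)) * cexp n ((t : ℕ) * (((p : ℕ) : ℤ) - (j : ℕ)))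
        = if j = p then ((x j : ℂ) * (y j : ℂ)) * n else 0 := by
      intro j
      rw [← Finset.mul_sum, orth n hn']
      simp only [fin_dvd_iff n j p]
      rcases eq_or_ne p j with h | h
      · rw [if_pos h, if_pos h.symm]
      · rw [if_neg h, if_neg (Ne.symm h), mul_zero]
    rw [Finset.sum_congr rfl (fun j _ => inner j), Finset.sum_ite_eq' Finset.univ p]
    simp
    ring
  -- main computation
  have main : (n : ℂ) * ∑ i : Fin ns, ((x (r i) : ℂ) * (y (r i) : ℂ))
      = (ns : ℂ) * ∑ j : Fin n, ((x j : ℂ) * (y j : ℂ)) := by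
    have step1 : (n : ℂ) * ∑ i : Fin ns, ((x (r i) : ℂ) * (y (r i) : ℂ))
        = ∑ i : Fin ns, ∑ t : Fin n, G (t : ℕ) * cexp n (((r i : ℕ) : ℤ) * (t : ℕ)) := by
      rw [Finset.mul_sum]
      exact Finset.sum_congr rfl (fun i _ => (inv (r i)).symm)
    rw [step1, Finset.sum_comm]
    have step2 : ∀ t : Fin n, ∑ i : Fin ns, G (t : ℕ) * cexp n (((r i : ℕ) : ℤ) * (t : ℕ))
        = G (t : ℕ) * (cexp n ((r0 : ℤ) * (t : ℕ)) *
            (if cexp n ((d : ℤ) * (t : ℕ)) = 1 then (ns : ℂ) else 0)) := by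
      intro t
      have hterm : ∀ i : Fin ns, cexp n (((r i : ℕ) : ℤ) * (t : ℕ))
          = cexp n ((r0 : ℤ) * (t : ℕ)) * (cexp n ((d : ℤ) * (t : ℕ))) ^ (i : ℕ) := by
        intro i
        have hcg : (n : ℤ) ∣ ((((r i : ℕ) : ℤ)) - ((r0 : ℤ) + (i : ℕ) * d)) := by
          set a : ℤ := ((r0 + (i : ℕ) * d : ℕ) : ℤ) with haa
          have h1 : ((r i : ℕ) : ℤ) = a % n := by
            rw [hr i, haa]
            push_cast [Int.natCast_mod]
            ring
          have h2 : ((r0 : ℤ) + ((i : ℕ) : ℤ) * (d : ℤ)) = a := by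
            rw [haa]; push_cast; ring
          rw [h1, h2]
          refine ⟨-(a / n), ?_⟩
          have := Int.emod_add_mul_ediv a n
          linarith
        have hcg2 : (n : ℤ) ∣ ((((r i : ℕ) : ℤ) * (t : ℕ)) - (((r0 : ℤ) + (i : ℕ) * d) * (t : ℕ))) := by
          obtain ⟨q, hq⟩ := hcg
          exact ⟨q * (t : ℕ), by linear_combination ((t : ℕ) : ℤ) * hq⟩
        rw [cexp_congr n hn' _ _ hcg2, show (((r0 : ℤ) + (i : ℕ) * d) * (t : ℕ) : ℤ)
            = (r0 : ℤ) * (t : ℕ) + ((d : ℤ) * (t : ℕ)) * (i : ℕ) by push_cast; ring,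
          cexp_add, cexp_pow]
      rw [Finset.sum_congr rfl (fun i _ => by rw [hterm i])]
      have : ∑ i : Fin ns, G (t : ℕ) * (cexp n ((r0 : ℤ) * (t : ℕ)) * (cexp n ((d : ℤ) * (t : ℕ))) ^ (i : ℕ))
          = G (t : ℕ) * (cexp n ((r0 : ℤ) * (t : ℕ)) * ∑ i : Fin ns, (cexp n ((d : ℤ) * (t : ℕ))) ^ (i : ℕ)) := by
        rw [Finset.mul_sum]
        congr 1
        rw [Finset.mul_sum]
      rw [this, geom_sum_root ns _ (by
        rw [cexp_pow, show ((d : ℤ) * (t : ℕ) * (ns : ℕ) : ℤ) = (n : ℤ) * (t : ℕ) by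
          push_cast [← hd]; ring]
        exact cexp_nmul n hn' (t : ℕ))]
    rw [Finset.sum_congr rfl (fun t _ => step2 t)]
    rw [Finset.sum_eq_single_of_mem (⟨0, by omega⟩ : Fin n) (Finset.mem_univ _)]
    · have hG0 : G (0 : ℤ) = ∑ j : Fin n, ((x j : ℂ) * (y j : ℂ)) := by
        rw [hG]
        apply Finset.sum_congr rfl
        intro j _
        simp [cexp_zero]
      simp only [Fin.val_mk, Nat.cast_zero, mul_zero, cexp_zero, if_true, mul_one, one_mul]
      rw [hG0]
      ring
    · intro t _ ht
      by_cases hone : cexp n ((d : ℤ) * (t : ℕ)) = 1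
      · have hdvd2 : (n : ℤ) ∣ (d : ℤ) * (t : ℕ) := (cexp_eq_one_iff n hn' _).mp hone
        -- deduce ns ∣ t
        obtain ⟨q, hq⟩ := hdvd2
        have hd0 : (d : ℤ) ≠ 0 := by exact_mod_cast Nat.one_le_iff_ne_zero.mp hd1
        have htq : ((t : ℕ) : ℤ) = (ns : ℤ) * q := by
          have : (d : ℤ) * (t : ℕ) = (d : ℤ) * ((ns : ℤ) * q) := by
            rw [hq]
            push_cast [← hd]
            ring
          exact mul_left_cancel₀ hd0 this
        have ht0 : 0 < (t : ℕ) := by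
          rcases Nat.eq_zero_or_pos (t : ℕ) with h | h
          · exact absurd (Fin.ext h) ht
          · exact h
        have hq1 : 1 ≤ q := by nlinarith [htq, ht0, hns1]
        have htn : ((t : ℕ) : ℤ) < n := by exact_mod_cast t.isLt
        have hqd : q < d := by nlinarith [htq, htn, hd, hns1]
        have hb1 : (ns : ℤ) ≤ ((t : ℕ) : ℤ) := by nlinarith [htq, hq1]
        have hb2 : ((t : ℕ) : ℤ) ≤ (n : ℤ) - ns := by nlinarith [htq, hqd, hd]
        have hmod : ((t : ℕ) : ℤ) % n = (t : ℕ) :=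
          Int.emod_eq_of_lt (by positivity) htn
        have hGt : G ((t : ℕ) : ℤ) = 0 := by
          rw [hG]
          apply prod_vanish n ϖ hn' hϖ x y hx hy
          · rw [hmod]; omega
          · rw [hmod]; omega
        rw [hGt, zero_mul]
      · rw [if_neg hone, mul_zero, mul_zero]
  -- cast back to ℝ
  have : ((((n : ℝ) * ∑ i : Fin ns, x (r i) * y (r i)) : ℝ) : ℂ)
      = (((ns : ℝ) * ∑ j : Fin n, x j * y j : ℝ) : ℂ) := by
    push_cast
    convert main using 2
  exact_mod_cast this

end MRBaux

set_option maxHeartbeats 1000000 in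
/-- error bound for the minimal-norm modulator estimate in terms of the
equally spaced samples of the signal and of the true modulator. -/
theorem modulator_recovery_error_bound
    (n ω ϖ ns : ℕ) (hn : 1 ≤ n) (hω : 1 ≤ ω) (hωϖ : ω ≤ ϖ)
    (m : EuclideanSpace ℝ (Fin n)) (hm : m ∈ Mmod n ω) (hmne : m ≠ 0)
    (c : EuclideanSpace ℝ (Fin n)) (hc : ∀ j, |c j| ≤ 1)
    (s : EuclideanSpace ℝ (Fin n)) (hs : ∀ j, s j = m j * c j)
    (hdvd : ns ∣ n) (hns : 2 * ϖ - 1 ≤ ns)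
    (r0 : ℕ) (hr0 : r0 < n) (r : Fin ns → Fin n)
    (hr : ∀ i : Fin ns, (r i : ℕ) = (r0 + (i : ℕ) * (n / ns)) % n)
    (mhat : EuclideanSpace ℝ (Fin n))
    (hmhat : mhat ∈ Sgeq n s ∩ Sband n ϖ)
    (hmin : ∀ x ∈ Sgeq n s ∩ Sband n ϖ, ‖mhat‖ ≤ ‖x‖) :
    ‖m - mhat‖ / ‖m‖ ≤
      Real.sqrt (1 - (∑ i : Fin ns, (s (r i)) ^ 2) / (∑ i : Fin ns, (m (r i)) ^ 2)) := by
  have hϖ : 1 ≤ ϖ := le_trans hω hωϖ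
  have hns1 : 1 ≤ ns := by omega
  -- m is ϖ-bandlimited
  have hmS : m ∈ Sband n ϖ := by
    intro k hk
    apply hm.1
    intro hmem
    apply hk
    simp only [Kset, Set.mem_setOf_eq] at hmem ⊢
    omega
  have hmpos : ∀ j, 0 ≤ m j := hm.2
  have hsm : ∀ j, |s j| ≤ m j := by
    intro j
    rw [hs j, abs_mul, abs_of_nonneg (hmpos j)]
    nlinarith [hc j, abs_nonneg (c j), hmpos j]
  have hmemm : m ∈ Sgeq n s ∩ Sband n ϖ := ⟨hsm, hmS⟩
  -- variational inequality: ⟪mhat, m - mhat⟫ ≥ 0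
  have hvar : (0 : ℝ) ≤ inner ℝ mhat (m - mhat) := by
    by_contra hneg
    push_neg at hneg
    set v : EuclideanSpace ℝ (Fin n) := m - mhat with hv
    set ε : ℝ := -(inner ℝ mhat v : ℝ) with hε
    have hε0 : 0 < ε := by simp only [hε]; linarith
    have hv0 : v ≠ 0 := by
      intro h
      rw [h] at hneg
      simp at hneg
    have hvn : 0 < ‖v‖ := norm_pos_iff.mpr hv0
    set t : ℝ := min 1 (ε / ‖v‖ ^ 2) with htd
    have ht0 : 0 < t := lt_min one_pos (by positivity)
    have ht1 : t ≤ 1 := min_le_left _ _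
    have htv : t * ‖v‖ ^ 2 ≤ ε := by
      have : t ≤ ε / ‖v‖ ^ 2 := min_le_right _ _
      calc t * ‖v‖ ^ 2 ≤ (ε / ‖v‖ ^ 2) * ‖v‖ ^ 2 := by nlinarith [sq_nonneg ‖v‖]
        _ = ε := by field_simp
    set z : EuclideanSpace ℝ (Fin n) := mhat + t • v with hz
    have hzj : ∀ j, z j = mhat j + t * (m j - mhat j) := by
      intro j
      simp [hz, hv, PiLp.add_apply, PiLp.smul_apply, PiLp.sub_apply, smul_eq_mul]
    have hzmem : z ∈ Sgeq n s ∩ Sband n ϖ := by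
      constructor
      · intro j
        rw [hzj j]
        nlinarith [hmhat.1 j, hsm j]
      · intro k hk
        have e1 := hmhat.2 k hk
        have e2 := hmS k hk
        have : ∀ j : Fin n, ((z j : ℝ) : ℂ) *
            Complex.exp (-(2 * (Real.pi : ℂ) * Complex.I * ((j : ℕ) : ℂ) * ((k : ℕ) : ℂ)) / (n : ℂ))
            = (mhat j : ℂ) * Complex.exp (-(2 * (Real.pi : ℂ) * Complex.I * ((j : ℕ) : ℂ) * ((k : ℕ) : ℂ)) / (n : ℂ))
              + (t : ℂ) * ((m j : ℂ) * Complex.exp (-(2 * (Real.pi : ℂ) * Complex.I * ((j : ℕ) : ℂ) * ((k : ℕ) : ℂ)) / (n : ℂ)))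
              - (t : ℂ) * ((mhat j : ℂ) * Complex.exp (-(2 * (Real.pi : ℂ) * Complex.I * ((j : ℕ) : ℂ) * ((k : ℕ) : ℂ)) / (n : ℂ))) := by
          intro j
          rw [hzj j]
          push_cast
          ring
        rw [Finset.sum_congr rfl (fun j _ => this j), Finset.sum_sub_distrib,
          Finset.sum_add_distrib, ← Finset.mul_sum, ← Finset.mul_sum, e1, e2]
        simp
    have hle := hmin z hzmem
    have hsq : ‖mhat‖ ^ 2 ≤ ‖z‖ ^ 2 := by
      apply pow_le_pow_left₀ (norm_nonneg _) hle
    have hexp : ‖z‖ ^ 2 = ‖mhat‖ ^ 2 + 2 * (t * (inner ℝ mhat v : ℝ)) + t ^ 2 * ‖v‖ ^ 2 := by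
      rw [hz, norm_add_sq_real, real_inner_smul_right, norm_smul]
      rw [Real.norm_eq_abs, abs_of_pos ht0]
      ring
    rw [hexp] at hsq
    nlinarith [hsq, ht0, hε0, htv]
  -- sampling identities
  have hAA := MRBaux.sampling n ϖ ns hn hϖ hdvd hns hns1 r0 r hr m m hmS hmS
  have hAC := MRBaux.sampling n ϖ ns hn hϖ hdvd hns hns1 r0 r hr m mhat hmS hmhat.2
  -- inner products and norms
  have hinner : ∀ a b : EuclideanSpace ℝ (Fin n), (inner ℝ a b : ℝ) = ∑ j, a j * b j := by
    intro a b
    simp [PiLp.inner_apply, RCLike.inner_apply, mul_comm]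
  have hnormsq : ∀ a : EuclideanSpace ℝ (Fin n), ‖a‖ ^ 2 = ∑ j, a j * a j := by
    intro a
    rw [← real_inner_self_eq_norm_sq, hinner]
  set A : ℝ := ∑ i : Fin ns, (m (r i)) ^ 2 with hA
  set B : ℝ := ∑ i : Fin ns, (s (r i)) ^ 2 with hB
  set C : ℝ := ∑ i : Fin ns, m (r i) * mhat (r i) with hC
  set I : ℝ := inner ℝ m mhat with hI
  have f1 : (n : ℝ) * A = (ns : ℝ) * ‖m‖ ^ 2 := by
    rw [hnormsq, hA]
    rw [Finset.sum_congr rfl (fun i _ => pow_two (m (r i)))]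
    exact hAA
  have f2 : (n : ℝ) * C = (ns : ℝ) * I := by
    rw [hI, hinner]
    exact hAC
  have f3 : B ≤ C := by
    apply Finset.sum_le_sum
    intro i _
    nlinarith [hsm (r i), hmhat.1 (r i), abs_nonneg (s (r i)), sq_abs (s (r i))]
  have hMpos : 0 < ‖m‖ := norm_pos_iff.mpr hmne
  have hn0 : (0 : ℝ) < n := by exact_mod_cast hn
  have hns0 : (0 : ℝ) < ns := by exact_mod_cast hns1
  have hApos : 0 < A := by
    by_contra h
    push_neg at h
    have h0 : 0 < (ns : ℝ) * ‖m‖ ^ 2 := by positivity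
    nlinarith [mul_nonneg hn0.le (neg_nonneg.mpr h)]
  -- key quadratic inequality
  have hIge : (n : ℝ) * B ≤ (ns : ℝ) * I := by
    calc (n : ℝ) * B ≤ (n : ℝ) * C := mul_le_mul_of_nonneg_left f3 hn0.le
      _ = (ns : ℝ) * I := f2
  have hvar' : ‖mhat‖ ^ 2 ≤ I := by
    have h1 : (inner ℝ mhat (m - mhat) : ℝ) = (inner ℝ mhat m : ℝ) - (inner ℝ mhat mhat : ℝ) :=
      inner_sub_right mhat m mhat
    have h2 : (inner ℝ mhat m : ℝ) = I := by rw [hI]; exact real_inner_comm m mhat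
    have h3 : (inner ℝ mhat mhat : ℝ) = ‖mhat‖ ^ 2 := real_inner_self_eq_norm_sq mhat
    rw [h1, h2, h3] at hvar
    linarith
  have hP2 : ‖m - mhat‖ ^ 2 ≤ ‖m‖ ^ 2 - I := by
    have := norm_sub_sq_real m mhat
    rw [← hI] at this
    linarith [hvar', this]
  -- final algebra
  rw [show ‖m - mhat‖ / ‖m‖ = Real.sqrt ((‖m - mhat‖ / ‖m‖) ^ 2) from
    (Real.sqrt_sq (by positivity)).symm]
  apply Real.sqrt_le_sqrt
  rw [div_pow, div_le_iff₀ (by positivity)]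
  have hM2 : ‖m‖ ^ 2 * ns = n * A := by linarith [f1]
  have hBA : B / A * ‖m‖ ^ 2 = (n : ℝ) * B / ns := by
    rw [div_mul_eq_mul_div, div_eq_div_iff (ne_of_gt hApos) (ne_of_gt hns0)]
    linear_combination B * hM2
  have hIB : (n : ℝ) * B / ns ≤ I := by
    rw [div_le_iff₀ hns0]
    linarith [hIge]
  nlinarith [hP2, hIB, hBA]
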